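/- For every α, β ∈ {−1, 1}, every bijection f of the 13-point set C_{α,β} onto itself with the property that a triple of points is collinear if and only if its image triple is collinear satisfies f({V₁, V₂, V₃}) = {V₁, V₂, V₃} (the configuration is stable). -/

import Mathlib

noncomputable section

/-- The real projective plane `ℙ²(ℝ)`. -/
abbrev ProjPlaneR := Projectivization ℝ (Fin 3 → ℝ)

/-- A vector `![a,b,c]` with a nonzero coordinate is nonzero. -/
theorem vne (a b c : ℝ) (i : Fin 3) (h : ![a, b, c] i ≠ 0) : ![a, b, c] ≠ 0 :=
  fun he => h (by rw [he]; simp)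

/-- The point `(a : b : c)` of `ℙ²(ℝ)`. -/
def mkP (a b c : ℝ) (h : ![a, b, c] ≠ 0) : ProjPlaneR :=
  Projectivization.mk ℝ ![a, b, c] h

/-- A set of points of `ℙ²(ℝ)` lies on a common projective line iff some nonzero
linear form vanishes on (representatives of) all of them. -/
def ProjCollinear (s : Set ProjPlaneR) : Prop :=
  ∃ f : (Fin 3 → ℝ) →ₗ[ℝ] ℝ, f ≠ 0 ∧ ∀ p ∈ s, f p.rep = 0

/-! The points of the configuration `C_{α,β}`. -/

def V₁ : ProjPlaneR := mkP 0 1 0 (vne _ _ _ 1 (by norm_num))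
def V₂ : ProjPlaneR := mkP 1 0 0 (vne _ _ _ 0 (by norm_num))
def V₃ : ProjPlaneR := mkP 0 0 1 (vne _ _ _ 2 (by simp))
def S₁ : ProjPlaneR := mkP 1 1 1 (vne _ _ _ 0 (by norm_num))
def S₂ : ProjPlaneR := mkP 4 4 1 (vne _ _ _ 0 (by norm_num))
def S₃ : ProjPlaneR := mkP (-1) 8 2 (vne _ _ _ 0 (by norm_num))
def S₄ : ProjPlaneR := mkP 8 (-1) 2 (vne _ _ _ 0 (by norm_num))
def S₅ (α : ℝ) : ProjPlaneR := mkP (-1) 8 (4 * α) (vne _ _ _ 0 (by norm_num))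
def S₆ (α : ℝ) : ProjPlaneR := mkP (-1) (4 * α) 2 (vne _ _ _ 0 (by norm_num))
def S₇ (α : ℝ) : ProjPlaneR := mkP (-α) 4 4 (vne _ _ _ 1 (by norm_num))
def S₈ (β : ℝ) : ProjPlaneR := mkP 8 (-1) (4 * β) (vne _ _ _ 0 (by norm_num))
def S₉ (β : ℝ) : ProjPlaneR := mkP (4 * β) (-1) 2 (vne _ _ _ 1 (by norm_num))
def S₁₀ (β : ℝ) : ProjPlaneR := mkP 4 (-β) 4 (vne _ _ _ 0 (by norm_num))

/-- The configuration `C_{α,β}` as a set of 13 points of `ℙ²(ℝ)`. -/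
def Cconf (α β : ℝ) : Set ProjPlaneR :=
  {V₁, V₂, V₃, S₁, S₂, S₃, S₄, S₅ α, S₆ α, S₇ α, S₈ β, S₉ β, S₁₀ β}

open Matrix

def det3' {R : Type*} [CommRing R] (u v x : Fin 3 → R) : R :=
  u 0 * (v 1 * x 2 - v 2 * x 1) - u 1 * (v 0 * x 2 - v 2 * x 0) + u 2 * (v 0 * x 1 - v 1 * x 0)

/-- dot-product linear form -/
def dotForm (c : Fin 3 → ℝ) : (Fin 3 → ℝ) →ₗ[ℝ] ℝ where
  toFun v := v ⬝ᵥ c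
  map_add' u v := add_dotProduct u v c
  map_smul' a v := by simp [smul_dotProduct]

lemma dotForm_apply (c v : Fin 3 → ℝ) : dotForm c v = v ⬝ᵥ c := rfl

lemma det3'_eq_det (u v x : Fin 3 → ℝ) :
    (Matrix.of ![u, v, x]).det = det3' u v x := by
  rw [Matrix.det_fin_three]
  simp [det3', Matrix.of_apply]
  ring

lemma phi_eq_dotForm (φ : (Fin 3 → ℝ) →ₗ[ℝ] ℝ) :
    φ = dotForm (fun i => φ (Pi.single i 1)) := by
  apply LinearMap.ext
  intro v
  have hv : v = ∑ i, v i • (Pi.single i (1:ℝ) : Fin 3 → ℝ) := by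
    ext j
    rw [Finset.sum_apply]
    simp [Pi.single_apply]
  have h2 : φ v = ∑ i, v i * φ (Pi.single i 1) := by
    conv_lhs => rw [hv]
    rw [map_sum]
    simp [smul_eq_mul]
  rw [dotForm_apply, dotProduct, h2]

lemma rep_eq_smul (w : Fin 3 → ℝ) (hw : w ≠ 0) :
    ∃ a : ℝˣ, a • w = (Projectivization.mk ℝ w hw).rep := by
  rw [← Projectivization.mk_eq_mk_iff ℝ _ _ (Projectivization.rep_nonzero _) hw]
  exact Projectivization.mk_rep _

lemma dotForm_ne_zero {c : Fin 3 → ℝ} (hc0 : c ≠ 0) : dotForm c ≠ 0 := by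
  intro h0
  apply hc0
  ext i
  have := congrArg (fun φ : (Fin 3 → ℝ) →ₗ[ℝ] ℝ => φ (Pi.single i 1)) h0
  simpa [dotForm_apply, single_dotProduct] using this

/-- key: collinear if det vanishes -/
lemma col_of_det3 (u v x : Fin 3 → ℝ) (hu : u ≠ 0) (hv : v ≠ 0) (hx : x ≠ 0)
    (h : det3' u v x = 0) :
    ProjCollinear {Projectivization.mk ℝ u hu, Projectivization.mk ℝ v hv,
      Projectivization.mk ℝ x hx} := by
  obtain ⟨c, hc0, hMc⟩ := (Matrix.exists_mulVec_eq_zero_iff (M := Matrix.of ![u, v, x])).2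
    (by rw [det3'_eq_det]; exact h)
  refine ⟨dotForm c, dotForm_ne_zero hc0, ?_⟩
  have hrow : ∀ (w : Fin 3 → ℝ) (hw : w ≠ 0), (∃ j : Fin 3, Matrix.of ![u,v,x] j = w) →
      dotForm c (Projectivization.mk ℝ w hw).rep = 0 := by
    rintro w hw ⟨j, hj⟩
    obtain ⟨a, ha⟩ := rep_eq_smul w hw
    have hw0 : w ⬝ᵥ c = 0 := by
      subst hj
      exact congrFun hMc j
    rw [dotForm_apply, ← ha, smul_dotProduct, hw0, smul_zero]
  rintro p (rfl | rfl | rfl)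
  · exact hrow u hu ⟨0, rfl⟩
  · exact hrow v hv ⟨1, rfl⟩
  · exact hrow x hx ⟨2, rfl⟩

lemma not_col_of_det3 (u v x : Fin 3 → ℝ) (hu : u ≠ 0) (hv : v ≠ 0) (hx : x ≠ 0)
    (h : det3' u v x ≠ 0) :
    ¬ ProjCollinear {Projectivization.mk ℝ u hu, Projectivization.mk ℝ v hv,
      Projectivization.mk ℝ x hx} := by
  rintro ⟨φ, hφ0, hφ⟩
  set c : Fin 3 → ℝ := fun i => φ (Pi.single i 1) with hc
  have hφd : φ = dotForm c := phi_eq_dotForm φ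
  have hvan : ∀ (w : Fin 3 → ℝ) (hw : w ≠ 0),
      Projectivization.mk ℝ w hw ∈ ({Projectivization.mk ℝ u hu, Projectivization.mk ℝ v hv,
        Projectivization.mk ℝ x hx} : Set ProjPlaneR) → w ⬝ᵥ c = 0 := by
    intro w hw hmem
    have h1 := hφ _ hmem
    obtain ⟨a, ha⟩ := rep_eq_smul w hw
    rw [hφd, ← ha, dotForm_apply, smul_dotProduct] at h1
    have ha0 : (a : ℝ) ≠ 0 := a.ne_zero
    rw [Units.smul_def, smul_eq_mul, mul_eq_zero] at h1
    tauto
  apply h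
  rw [← det3'_eq_det, ← Matrix.exists_mulVec_eq_zero_iff]
  refine ⟨c, ?_, ?_⟩
  · intro hc0
    apply hφ0
    rw [hφd, hc0]
    apply LinearMap.ext; intro y; simp [dotForm_apply]
  · ext j
    fin_cases j
    · exact hvan u hu (by left; rfl)
    · exact hvan v hv (by right; left; rfl)
    · exact hvan x hx (by right; right; rfl)

lemma mk_ne_of_det3 (u v x : Fin 3 → ℝ) (hu : u ≠ 0) (hv : v ≠ 0)
    (h : det3' u v x ≠ 0) :
    Projectivization.mk ℝ u hu ≠ Projectivization.mk ℝ v hv := by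
  intro he
  obtain ⟨a, ha⟩ := (Projectivization.mk_eq_mk_iff ℝ _ _ hu hv).1 he
  apply h
  rw [← ha]
  simp only [det3', Pi.smul_apply, Units.smul_def, smul_eq_mul]
  ring

lemma mk_congr' (u v : Fin 3 → ℝ) (hu : u ≠ 0) (hv : v ≠ 0) (h : u = v) :
    Projectivization.mk ℝ u hu = Projectivization.mk ℝ v hv := by
  subst h; rfl

/-! ### The integer model -/

def ib (x : Bool) : ℤ := cond x 1 (-1)

def wI (a b : ℤ) : Fin 13 → Fin 3 → ℤ :=
  ![![0,1,0], ![1,0,0], ![0,0,1], ![1,1,1], ![4,4,1], ![-1,8,2], ![8,-1,2],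
    ![-1,8,4*a], ![-1,4*a,2], ![-a,4,4], ![8,-1,4*b], ![4*b,-1,2], ![4,-b,4]]

def e3 : Fin 3 → Fin 3 → ℤ := ![![1,0,0],![0,1,0],![0,0,1]]

def T (i j k : Fin 13) : Prop := det3' (wI 1 1 i) (wI 1 1 j) (wI 1 1 k) = 0

instance (i j k : Fin 13) : Decidable (T i j k) := by unfold T; infer_instance

def degT (i : Fin 13) : ℕ :=
  (Finset.univ.filter fun p : Fin 13 × Fin 13 =>
    T i p.1 p.2 ∧ p.1 ≠ p.2 ∧ p.1 ≠ i ∧ p.2 ≠ i).card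

lemma deg_vert : degT 0 = 10 ∧ degT 1 = 10 ∧ degT 2 = 10 := by decide

lemma deg_big : ∀ i : Fin 13, 10 ≤ degT i → i = 0 ∨ i = 1 ∨ i = 2 := by decide

lemma tab_eq : ∀ (x y : Bool) (i j k : Fin 13),
    det3' (wI (ib x) (ib y) i) (wI (ib x) (ib y) j) (wI (ib x) (ib y) k) = 0 ↔ T i j k := by
  decide

lemma inj_int : ∀ (x y : Bool) (i j : Fin 13), i ≠ j →
    ∃ k : Fin 3, det3' (wI (ib x) (ib y) i) (wI (ib x) (ib y) j) (e3 k) ≠ 0 := by decide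

lemma wne : ∀ (x y : Bool) (i : Fin 13), wI (ib x) (ib y) i ≠ 0 := by decide

/-! ### Bridging reals and integers -/

def castv (u : Fin 3 → ℤ) : Fin 3 → ℝ := fun t => (u t : ℝ)

lemma castv_ne (u : Fin 3 → ℤ) (h : u ≠ 0) : castv u ≠ 0 := by
  intro h0
  apply h
  funext t
  have := congrFun h0 t
  simpa [castv, Int.cast_eq_zero] using this

lemma det3'_cast (u v x : Fin 3 → ℤ) :
    det3' (castv u) (castv v) (castv x) = ((det3' u v x : ℤ) : ℝ) := by
  simp only [det3', castv]
  push_cast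
  ring

/-- The configuration as a function on `Fin 13`. -/
def Pf (α β : ℝ) : Fin 13 → ProjPlaneR :=
  ![V₁, V₂, V₃, S₁, S₂, S₃, S₄, S₅ α, S₆ α, S₇ α, S₈ β, S₉ β, S₁₀ β]

lemma bridge (α β : ℝ) (x y : Bool) (hx : α = ((ib x : ℤ) : ℝ)) (hy : β = ((ib y : ℤ) : ℝ))
    (i : Fin 13) :
    Pf α β i = Projectivization.mk ℝ (castv (wI (ib x) (ib y) i)) (castv_ne _ (wne x y i)) := by
  subst hx; subst hy
  have key : ∀ (n : Fin 13) (r0 r1 r2 : ℝ) (hne : ![r0, r1, r2] ≠ 0),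
      ((wI (ib x) (ib y) n 0 : ℤ) : ℝ) = r0 → ((wI (ib x) (ib y) n 1 : ℤ) : ℝ) = r1 →
      ((wI (ib x) (ib y) n 2 : ℤ) : ℝ) = r2 →
      Projectivization.mk ℝ ![r0, r1, r2] hne
        = Projectivization.mk ℝ (castv (wI (ib x) (ib y) n)) (castv_ne _ (wne x y n)) := by
    intro n r0 r1 r2 hne h0 h1 h2
    apply mk_congr'
    funext t
    fin_cases t <;> simp [castv, ← h0, ← h1, ← h2]
  fin_cases i
  · exact key 0 (0) (1) (0) _ (by rw [show wI (ib x) (ib y) 0 0 = 0 from rfl]; push_cast; ring) (by rw [show wI (ib x) (ib y) 0 1 = 1 from rfl]; push_cast; ring) (by rw [show wI (ib x) (ib y) 0 2 = 0 from rfl]; push_cast; ring)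
  · exact key 1 (1) (0) (0) _ (by rw [show wI (ib x) (ib y) 1 0 = 1 from rfl]; push_cast; ring) (by rw [show wI (ib x) (ib y) 1 1 = 0 from rfl]; push_cast; ring) (by rw [show wI (ib x) (ib y) 1 2 = 0 from rfl]; push_cast; ring)
  · exact key 2 (0) (0) (1) _ (by rw [show wI (ib x) (ib y) 2 0 = 0 from rfl]; push_cast; ring) (by rw [show wI (ib x) (ib y) 2 1 = 0 from rfl]; push_cast; ring) (by rw [show wI (ib x) (ib y) 2 2 = 1 from rfl]; push_cast; ring)
  · exact key 3 (1) (1) (1) _ (by rw [show wI (ib x) (ib y) 3 0 = 1 from rfl]; push_cast; ring) (by rw [show wI (ib x) (ib y) 3 1 = 1 from rfl]; push_cast; ring) (by rw [show wI (ib x) (ib y) 3 2 = 1 from rfl]; push_cast; ring)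
  · exact key 4 (4) (4) (1) _ (by rw [show wI (ib x) (ib y) 4 0 = 4 from rfl]; push_cast; ring) (by rw [show wI (ib x) (ib y) 4 1 = 4 from rfl]; push_cast; ring) (by rw [show wI (ib x) (ib y) 4 2 = 1 from rfl]; push_cast; ring)
  · exact key 5 ((-1)) (8) (2) _ (by rw [show wI (ib x) (ib y) 5 0 = -1 from rfl]; push_cast; ring) (by rw [show wI (ib x) (ib y) 5 1 = 8 from rfl]; push_cast; ring) (by rw [show wI (ib x) (ib y) 5 2 = 2 from rfl]; push_cast; ring)
  · exact key 6 (8) ((-1)) (2) _ (by rw [show wI (ib x) (ib y) 6 0 = 8 from rfl]; push_cast; ring) (by rw [show wI (ib x) (ib y) 6 1 = -1 from rfl]; push_cast; ring) (by rw [show wI (ib x) (ib y) 6 2 = 2 from rfl]; push_cast; ring)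
  · exact key 7 ((-1)) (8) (4 * ((ib x : ℤ) : ℝ)) _ (by rw [show wI (ib x) (ib y) 7 0 = -1 from rfl]; push_cast; ring) (by rw [show wI (ib x) (ib y) 7 1 = 8 from rfl]; push_cast; ring) (by rw [show wI (ib x) (ib y) 7 2 = 4*(ib x) from rfl]; push_cast; ring)
  · exact key 8 ((-1)) (4 * ((ib x : ℤ) : ℝ)) (2) _ (by rw [show wI (ib x) (ib y) 8 0 = -1 from rfl]; push_cast; ring) (by rw [show wI (ib x) (ib y) 8 1 = 4*(ib x) from rfl]; push_cast; ring) (by rw [show wI (ib x) (ib y) 8 2 = 2 from rfl]; push_cast; ring)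
  · exact key 9 (-((ib x : ℤ) : ℝ)) (4) (4) _ (by rw [show wI (ib x) (ib y) 9 0 = -(ib x) from rfl]; push_cast; ring) (by rw [show wI (ib x) (ib y) 9 1 = 4 from rfl]; push_cast; ring) (by rw [show wI (ib x) (ib y) 9 2 = 4 from rfl]; push_cast; ring)
  · exact key 10 (8) ((-1)) (4 * ((ib y : ℤ) : ℝ)) _ (by rw [show wI (ib x) (ib y) 10 0 = 8 from rfl]; push_cast; ring) (by rw [show wI (ib x) (ib y) 10 1 = -1 from rfl]; push_cast; ring) (by rw [show wI (ib x) (ib y) 10 2 = 4*(ib y) from rfl]; push_cast; ring)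
  · exact key 11 (4 * ((ib y : ℤ) : ℝ)) ((-1)) (2) _ (by rw [show wI (ib x) (ib y) 11 0 = 4*(ib y) from rfl]; push_cast; ring) (by rw [show wI (ib x) (ib y) 11 1 = -1 from rfl]; push_cast; ring) (by rw [show wI (ib x) (ib y) 11 2 = 2 from rfl]; push_cast; ring)
  · exact key 12 (4) (-((ib y : ℤ) : ℝ)) (4) _ (by rw [show wI (ib x) (ib y) 12 0 = 4 from rfl]; push_cast; ring) (by rw [show wI (ib x) (ib y) 12 1 = -(ib y) from rfl]; push_cast; ring) (by rw [show wI (ib x) (ib y) 12 2 = 4 from rfl]; push_cast; ring)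

lemma Hlem (α β : ℝ) (x y : Bool) (hx : α = ((ib x : ℤ) : ℝ)) (hy : β = ((ib y : ℤ) : ℝ)) :
    ∀ i j k : Fin 13, ProjCollinear {Pf α β i, Pf α β j, Pf α β k} ↔ T i j k := by
  intro i j k
  rw [bridge α β x y hx hy i, bridge α β x y hx hy j, bridge α β x y hx hy k]
  have hd := det3'_cast (wI (ib x) (ib y) i) (wI (ib x) (ib y) j) (wI (ib x) (ib y) k)
  constructor
  · intro h
    by_contra hT
    have hne : det3' (wI (ib x) (ib y) i) (wI (ib x) (ib y) j) (wI (ib x) (ib y) k) ≠ 0 :=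
      fun h0 => hT ((tab_eq x y i j k).mp h0)
    exact not_col_of_det3 _ _ _ _ _ _ (by rw [hd]; exact_mod_cast hne) h
  · intro h
    exact col_of_det3 _ _ _ _ _ _ (by rw [hd]; exact_mod_cast (tab_eq x y i j k).mpr h)

lemma Pinj (α β : ℝ) (x y : Bool) (hx : α = ((ib x : ℤ) : ℝ)) (hy : β = ((ib y : ℤ) : ℝ)) :
    ∀ i j : Fin 13, i ≠ j → Pf α β i ≠ Pf α β j := by
  intro i j hij
  obtain ⟨k, hk⟩ := inj_int x y i j hij
  rw [bridge α β x y hx hy i, bridge α β x y hx hy j]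
  apply mk_ne_of_det3 _ _ (castv (e3 k))
  rw [det3'_cast]
  exact_mod_cast hk

lemma hrange (α β : ℝ) : Cconf α β = Set.range (Pf α β) := by
  ext p
  constructor
  · intro hp
    simp only [Cconf, Set.mem_insert_iff, Set.mem_singleton_iff] at hp
    rcases hp with rfl|rfl|rfl|rfl|rfl|rfl|rfl|rfl|rfl|rfl|rfl|rfl|rfl
    exacts [⟨0, rfl⟩, ⟨1, rfl⟩, ⟨2, rfl⟩, ⟨3, rfl⟩, ⟨4, rfl⟩, ⟨5, rfl⟩, ⟨6, rfl⟩,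
      ⟨7, rfl⟩, ⟨8, rfl⟩, ⟨9, rfl⟩, ⟨10, rfl⟩, ⟨11, rfl⟩, ⟨12, rfl⟩]
  · rintro ⟨i, rfl⟩
    fin_cases i <;>
      first
      | exact (Or.inl rfl)
      | exact (Or.inr (Or.inl rfl))
      | exact (Or.inr (Or.inr (Or.inl rfl)))
      | exact (Or.inr (Or.inr (Or.inr (Or.inl rfl))))
      | exact (Or.inr (Or.inr (Or.inr (Or.inr (Or.inl rfl)))))
      | exact (Or.inr (Or.inr (Or.inr (Or.inr (Or.inr (Or.inl rfl))))))
      | exact (Or.inr (Or.inr (Or.inr (Or.inr (Or.inr (Or.inr (Or.inl rfl)))))))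
      | exact (Or.inr (Or.inr (Or.inr (Or.inr (Or.inr (Or.inr (Or.inr (Or.inl rfl))))))))
      | exact (Or.inr (Or.inr (Or.inr (Or.inr (Or.inr (Or.inr (Or.inr (Or.inr (Or.inl rfl)))))))))
      | exact (Or.inr (Or.inr (Or.inr (Or.inr (Or.inr (Or.inr (Or.inr (Or.inr (Or.inr (Or.inl rfl))))))))))
      | exact (Or.inr (Or.inr (Or.inr (Or.inr (Or.inr (Or.inr (Or.inr (Or.inr (Or.inr (Or.inr (Or.inl rfl)))))))))))
      | exact (Or.inr (Or.inr (Or.inr (Or.inr (Or.inr (Or.inr (Or.inr (Or.inr (Or.inr (Or.inr (Or.inr (Or.inl rfl))))))))))))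
      | exact (Or.inr (Or.inr (Or.inr (Or.inr (Or.inr (Or.inr (Or.inr (Or.inr (Or.inr (Or.inr (Or.inr (Or.inr (rfl)))))))))))))

/-! ### The combinatorial core -/

lemma combi (P : Fin 13 → ProjPlaneR) (hP : ∀ i j : Fin 13, i ≠ j → P i ≠ P j)
    (f : ProjPlaneR → ProjPlaneR)
    (hbij : Set.BijOn f (Set.range P) (Set.range P))
    (hcolP : ∀ i j k : Fin 13,
      ProjCollinear {P i, P j, P k} ↔ ProjCollinear {f (P i), f (P j), f (P k)})
    (H : ∀ i j k : Fin 13, ProjCollinear {P i, P j, P k} ↔ T i j k) :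
    f '' {P 0, P 1, P 2} = {P 0, P 1, P 2} := by
  have hmem : ∀ i : Fin 13, ∃ j, P j = f (P i) := fun i => hbij.mapsTo ⟨i, rfl⟩
  choose σ hσ using hmem
  have hσinj : Function.Injective σ := by
    intro i j h
    by_contra hne
    exact hP i j hne (hbij.injOn ⟨i, rfl⟩ ⟨j, rfl⟩ (by rw [← hσ i, ← hσ j, h]))
  have hT : ∀ i j k, T i j k → T (σ i) (σ j) (σ k) := by
    intro i j k h
    have h2 := (hcolP i j k).mp ((H i j k).mpr h)
    rw [← hσ i, ← hσ j, ← hσ k] at h2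
    exact (H _ _ _).mp h2
  have hmono : ∀ i, degT i ≤ degT (σ i) := by
    intro i
    unfold degT
    apply Finset.card_le_card_of_injOn (fun p => (σ p.1, σ p.2))
    · rintro ⟨j, k⟩ hm
      simp only [degT, Finset.coe_filter, Finset.mem_coe, Finset.mem_filter, Finset.mem_univ, true_and, Set.mem_setOf_eq] at hm ⊢
      obtain ⟨h1, h2, h3, h4⟩ := hm
      exact ⟨hT _ _ _ h1, fun h => h2 (hσinj h), fun h => h3 (hσinj h), fun h => h4 (hσinj h)⟩
    · rintro ⟨a, b⟩ _ ⟨c2, d⟩ _ h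
      simp only [Prod.mk.injEq] at h
      exact Prod.ext (hσinj h.1) (hσinj h.2)
  have hv : ∀ i : Fin 13, (i = 0 ∨ i = 1 ∨ i = 2) → (σ i = 0 ∨ σ i = 1 ∨ σ i = 2) := by
    intro i hi
    apply deg_big
    refine le_trans ?_ (hmono i)
    rcases hi with rfl | rfl | rfl
    · exact le_of_eq deg_vert.1.symm
    · exact le_of_eq deg_vert.2.1.symm
    · exact le_of_eq deg_vert.2.2.symm
  have h0 := hv 0 (Or.inl rfl)
  have h1 := hv 1 (Or.inr (Or.inl rfl))
  have h2 := hv 2 (Or.inr (Or.inr rfl))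
  have himg : f '' {P 0, P 1, P 2} = {P (σ 0), P (σ 1), P (σ 2)} := by
    rw [Set.image_insert_eq, Set.image_insert_eq, Set.image_singleton,
      ← hσ 0, ← hσ 1, ← hσ 2]
  rcases h0 with ha|ha|ha <;> rcases h1 with hb|hb|hb <;> rcases h2 with hc|hc|hc <;>
    first
      | exact absurd (hσinj (ha.trans hb.symm)) (by decide)
      | exact absurd (hσinj (ha.trans hc.symm)) (by decide)
      | exact absurd (hσinj (hb.trans hc.symm)) (by decide)
      | (rw [himg, ha, hb, hc];
         try (ext z; simp only [Set.mem_insert_iff, Set.mem_singleton_iff]; tauto))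
/--
For `α, β ∈ {−1,1}`, every bijection of the 13-point set `C_{α,β}` onto
itself that preserves collinearity of triples (in both directions) globally fixes the
set of vertices `{V₁, V₂, V₃}`: the configuration is stable.
-/
theorem stmt_2 (α β : ℝ) (hα : α = 1 ∨ α = -1) (hβ : β = 1 ∨ β = -1)
    (f : ProjPlaneR → ProjPlaneR)
    (hbij : Set.BijOn f (Cconf α β) (Cconf α β))
    (hcol : ∀ p ∈ Cconf α β, ∀ q ∈ Cconf α β, ∀ r ∈ Cconf α β,
      (ProjCollinear {p, q, r} ↔ ProjCollinear {f p, f q, f r})) :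
    f '' ({V₁, V₂, V₃} : Set ProjPlaneR) = {V₁, V₂, V₃} := by
  obtain ⟨x, hx⟩ : ∃ x : Bool, α = ((ib x : ℤ) : ℝ) := by
    rcases hα with rfl | rfl
    · exact ⟨true, by norm_num [ib]⟩
    · exact ⟨false, by norm_num [ib]⟩
  obtain ⟨y, hy⟩ : ∃ y : Bool, β = ((ib y : ℤ) : ℝ) := by
    rcases hβ with rfl | rfl
    · exact ⟨true, by norm_num [ib]⟩
    · exact ⟨false, by norm_num [ib]⟩
  have hr : Cconf α β = Set.range (Pf α β) := hrange α β
  have hm : ∀ i : Fin 13, Pf α β i ∈ Cconf α β := by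
    intro i; rw [hr]; exact ⟨i, rfl⟩
  have hbij' : Set.BijOn f (Set.range (Pf α β)) (Set.range (Pf α β)) := hr ▸ hbij
  have := combi (Pf α β) (Pinj α β x y hx hy) f hbij'
    (fun i j k => hcol _ (hm i) _ (hm j) _ (hm k))
    (Hlem α β x y hx hy)
  exact this

end
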